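/- arXiv:2308.01685 — 2 statements merged into one kernel-verified Lean document; each statement's English description precedes it below -/
import Mathlib

section
/- For every bipartite graph G, a(G) ≤ 2 + 2α(G) - 2√(1 + α(G)). -/
open Finset

namespace AnnPaper

variable {V : Type*}

/-- A finset of vertices is independent: no two of its members are adjacent. -/
def IsIndepFinset (G : SimpleGraph V) (s : Finset V) : Prop :=
  ∀ a ∈ s, ∀ b ∈ s, ¬ G.Adj a b

/-- The independence number `α(G)`. -/
noncomputable def indepNum (G : SimpleGraph V) : ℕ :=
  sSup {k | ∃ s : Finset V, IsIndepFinset G s ∧ s.card = k}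

/-- A finset of edges is a matching: edges of `G`, pairwise vertex-disjoint. -/
def IsMatchingFinset (G : SimpleGraph V) (s : Finset (Sym2 V)) : Prop :=
  (↑s ⊆ G.edgeSet) ∧ ∀ e ∈ s, ∀ f ∈ s, e ≠ f → ∀ v : V, v ∈ e → v ∉ f

/-- The matching number `μ(G)`. -/
noncomputable def matchNum (G : SimpleGraph V) : ℕ :=
  sSup {k | ∃ s : Finset (Sym2 V), IsMatchingFinset G s ∧ s.card = k}

/-- The number of edges `m(G)`. -/
noncomputable def edgeCount (G : SimpleGraph V) : ℕ := G.edgeSet.ncard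

/-- The degree of a vertex. -/
noncomputable def deg (G : SimpleGraph V) (v : V) : ℕ := (G.neighborSet v).ncard

/-- The annihilation number `a(G)`: the largest `k` such that the sum of the `k`
smallest degrees is at most `m(G)`; equivalently, the largest cardinality of a
set of vertices whose degree sum is at most `m(G)`. -/
noncomputable def annNum (G : SimpleGraph V) : ℕ :=
  sSup {k | ∃ A : Finset V, A.card = k ∧ ∑ v ∈ A, deg G v ≤ edgeCount G}

/-- The number of edges of the subgraph induced on a set of vertices. -/
noncomputable def inducedEdgeCount (G : SimpleGraph V) (A : Set V) : ℕ :=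
  (SimpleGraph.induce A G).edgeSet.ncard

open Classical in
lemma deg_eq_degree [Fintype V] (G : SimpleGraph V) (v : V) :
    deg G v = G.degree v := by
  classical
  rw [deg, ← SimpleGraph.card_neighborFinset_eq_degree]
  rw [Set.ncard_eq_toFinset_card']
  congr 1

open Classical in
lemma edgeCount_eq [Fintype V] (G : SimpleGraph V) :
    edgeCount G = G.edgeFinset.card := by
  classical
  rw [edgeCount, Set.ncard_eq_toFinset_card']
  exact congrArg Finset.card (by ext e; simp)

open Classical in
lemma sum_deg_eq [Fintype V] (G : SimpleGraph V) (A : Finset V) :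
    ∑ v ∈ A, deg G v = ∑ e ∈ G.edgeFinset, (A.filter (· ∈ e)).card := by
  classical
  have h1 : ∀ v, deg G v = (G.edgeFinset.filter (fun e => v ∈ e)).card := by
    intro v
    rw [deg_eq_degree, ← SimpleGraph.card_incidenceFinset_eq_degree,
      SimpleGraph.incidenceFinset_eq_filter]
  simp_rw [h1, Finset.card_filter]
  exact Finset.sum_comm

open Classical in
lemma filter_card_two [Fintype V] (G : SimpleGraph V) (A : Finset V) {e : Sym2 V}
    (he : e ∈ G.edgeFinset) (hA : ∀ v ∈ e, v ∈ A) : (A.filter (· ∈ e)).card = 2 := by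
  classical
  induction e with
  | _ x y =>
    rw [SimpleGraph.mem_edgeFinset, SimpleGraph.mem_edgeSet] at he
    have hxy : x ≠ y := G.ne_of_adj he
    have : A.filter (· ∈ s(x, y)) = {x, y} := by
      ext v
      simp only [Finset.mem_filter, Sym2.mem_iff, Finset.mem_insert, Finset.mem_singleton]
      constructor
      · rintro ⟨_, h⟩; exact h
      · rintro (rfl | rfl)
        · exact ⟨hA v (Sym2.mem_mk_left _ _), Or.inl rfl⟩
        · exact ⟨hA v (Sym2.mem_mk_right _ _), Or.inr rfl⟩
    rw [this, Finset.card_pair hxy]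

open Classical in
lemma mk_aux (e : Sym2 V) : s(e.out.1, e.out.2) = e := by
  rw [Sym2.mk, e.out_eq]

open Classical in
lemma EB_le [Fintype V] (G : SimpleGraph V) (C : G.Coloring (Fin 2)) (B : Finset V) :
    (G.edgeFinset.filter (fun e => ∀ v ∈ e, v ∈ B)).card ≤
      (B.filter (fun v => C v = 0)).card * (B.filter (fun v => C v ≠ 0)).card := by
  classical
  rw [← Finset.card_product]
  apply Finset.card_le_card_of_injOn
    (fun e => if C e.out.1 = 0 then (e.out.1, e.out.2) else (e.out.2, e.out.1))
  · intro e he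
    simp only [Finset.mem_coe, Finset.mem_filter, SimpleGraph.mem_edgeFinset, SimpleGraph.mem_edgeSet] at he
    obtain ⟨he1, he2⟩ := he
    have hadj : G.Adj e.out.1 e.out.2 := by
      rw [← SimpleGraph.mem_edgeSet, mk_aux]; exact he1
    have hne : C e.out.1 ≠ C e.out.2 := C.valid hadj
    have h1 : e.out.1 ∈ B := he2 _ (Sym2.out_fst_mem e)
    have h2 : e.out.2 ∈ B := he2 _ (Sym2.out_snd_mem e)
    have two : ∀ a b : Fin 2, a ≠ b → ((a = 0 → b ≠ 0) ∧ (a ≠ 0 → b = 0)) := by decide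
    by_cases h : C e.out.1 = 0
    · simp only [if_pos h]
      simp only [Finset.mem_coe, Finset.mem_product, Finset.mem_filter]
      exact ⟨⟨h1, h⟩, ⟨h2, (two _ _ hne).1 h⟩⟩
    · simp only [if_neg h]
      simp only [Finset.mem_coe, Finset.mem_product, Finset.mem_filter]
      exact ⟨⟨h2, (two _ _ hne).2 h⟩, ⟨h1, h⟩⟩
  · intro e _ e' _ hf
    have key : ∀ a : Sym2 V, s((if C a.out.1 = 0 then (a.out.1, a.out.2) else (a.out.2, a.out.1)).1,
        (if C a.out.1 = 0 then (a.out.1, a.out.2) else (a.out.2, a.out.1)).2) = a := by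
      intro a
      by_cases h : C a.out.1 = 0
      · simp only [h, if_true]; exact mk_aux a
      · simp only [h, if_false]; rw [Sym2.eq_swap]; exact mk_aux a
    have := key e
    dsimp only at hf
    rw [hf, key e'] at this
    exact this.symm

open Classical in
lemma EA_le_EB [Fintype V] (G : SimpleGraph V) (A : Finset V)
    (h : ∑ v ∈ A, deg G v ≤ G.edgeFinset.card) :
    (G.edgeFinset.filter (fun e => ∀ v ∈ e, v ∈ A)).card ≤
      (G.edgeFinset.filter (fun e => ∀ v ∈ e, v ∉ A)).card := by
  classical
  have key : ∀ e ∈ G.edgeFinset,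
      1 + (if (∀ v ∈ e, v ∈ A) then 1 else 0) ≤
        (A.filter (· ∈ e)).card + (if (∀ v ∈ e, v ∉ A) then 1 else 0) := by
    intro e he
    by_cases hA : ∀ v ∈ e, v ∈ A
    · rw [filter_card_two G A he hA, if_pos hA]
      omega
    · rw [if_neg hA]
      by_cases hB : ∀ v ∈ e, v ∉ A
      · rw [if_pos hB]; omega
      · rw [if_neg hB]
        push_neg at hB
        obtain ⟨v, hv1, hv2⟩ := hB
        have hmem : v ∈ A.filter (· ∈ e) := Finset.mem_filter.mpr ⟨hv2, hv1⟩
        have := Finset.card_pos.mpr ⟨v, hmem⟩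
        omega
  have hsum := Finset.sum_le_sum key
  rw [Finset.sum_add_distrib, Finset.sum_add_distrib, ← Finset.card_filter,
    ← Finset.card_filter, Finset.sum_const, smul_eq_mul, mul_one] at hsum
  have h2 : ∑ e ∈ G.edgeFinset, (A.filter (· ∈ e)).card ≤ G.edgeFinset.card := by
    rw [← sum_deg_eq]; exact h
  omega

lemma indep_le_indepNum [Fintype V] (G : SimpleGraph V) {s : Finset V}
    (hs : IsIndepFinset G s) : s.card ≤ indepNum G := by
  apply le_csSup
  · refine ⟨Fintype.card V, ?_⟩
    rintro k ⟨t, -, rfl⟩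
    exact Finset.card_le_univ t
  · exact ⟨s, hs, rfl⟩

lemma annNum_spec [Fintype V] (G : SimpleGraph V) :
    ∃ A : Finset V, A.card = annNum G ∧ ∑ v ∈ A, deg G v ≤ edgeCount G := by
  have hmem : annNum G ∈ {k | ∃ A : Finset V, A.card = k ∧ ∑ v ∈ A, deg G v ≤ edgeCount G} := by
    apply Nat.sSup_mem
    · exact ⟨0, ∅, by simp⟩
    · refine ⟨Fintype.card V, ?_⟩
      rintro k ⟨t, rfl, -⟩
      exact Finset.card_le_univ t
  obtain ⟨A, h1, h2⟩ := hmem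
  exact ⟨A, h1, h2⟩

open Classical in
lemma indep_from_sparse [Fintype V] (G : SimpleGraph V) (A : Finset V) :
    ∃ S : Finset V, IsIndepFinset G S ∧
      A.card ≤ S.card + (G.edgeFinset.filter (fun e => ∀ v ∈ e, v ∈ A)).card := by
  classical
  set EA := G.edgeFinset.filter (fun e => ∀ v ∈ e, v ∈ A) with hEA
  set T := EA.image (fun e => e.out.1) with hT
  refine ⟨A \ T, ?_, ?_⟩
  · intro x hx y hy hadj
    rw [Finset.mem_sdiff] at hx hy
    have hmem : s(x, y) ∈ EA := by
      rw [hEA, Finset.mem_filter, SimpleGraph.mem_edgeFinset, SimpleGraph.mem_edgeSet]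
      refine ⟨hadj, ?_⟩
      intro v hv
      rw [Sym2.mem_iff] at hv
      rcases hv with rfl | rfl
      · exact hx.1
      · exact hy.1
    have hout : (s(x, y) : Sym2 V).out.1 ∈ T := Finset.mem_image_of_mem _ hmem
    have : (s(x, y) : Sym2 V).out.1 ∈ s(x, y) := Sym2.out_fst_mem _
    rw [Sym2.mem_iff] at this
    rcases this with h | h
    · exact hx.2 (h ▸ hout)
    · exact hy.2 (h ▸ hout)
  · calc A.card ≤ (A \ T).card + T.card := Finset.card_le_card_sdiff_add_card
    _ ≤ (A \ T).card + EA.card := by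
        exact Nat.add_le_add_left (Finset.card_image_le) _

theorem stmt16 {V : Type*} [Fintype V] (G : SimpleGraph V) (hbip : G.Colorable 2) :
    (annNum G : ℝ) ≤ 2 + 2 * (indepNum G : ℝ) - 2 * Real.sqrt (1 + (indepNum G : ℝ)) := by
  classical
  obtain ⟨C⟩ := hbip
  obtain ⟨A, hAcard, hAsum⟩ := annNum_spec G
  set n := Fintype.card V with hn
  set a := annNum G with ha
  set α := indepNum G with hα
  -- color classes give n ≤ 2α
  have hmono : ∀ (t : Finset V) (c : Fin 2), (∀ v ∈ t, C v = c) → t.card ≤ α := by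
    intro t c h
    exact indep_le_indepNum G
      (fun x hx y hy hadj => C.valid hadj (((h x hx).trans (h y hy).symm)))
  have h0 : (Finset.univ.filter (fun v => C v = 0)).card ≤ α := by
    apply hmono _ 0
    intro v hv
    exact (Finset.mem_filter.mp hv).2
  have h1 : (Finset.univ.filter (fun v => ¬ C v = 0)).card ≤ α := by
    apply hmono _ 1
    intro v hv
    have := (Finset.mem_filter.mp hv).2
    revert this
    have : ∀ x : Fin 2, x ≠ 0 → x = 1 := by decide
    exact this _
  have hsplit : (Finset.univ.filter (fun v => C v = 0)).card +
      (Finset.univ.filter (fun v => ¬ C v = 0)).card = n := by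
    rw [Finset.card_filter_add_card_filter_not, Finset.card_univ]
  have hn2α : n ≤ 2 * α := by omega
  -- the complement B
  set B : Finset V := Aᶜ with hB
  have hkn : A.card + B.card = n := by
    rw [hB, Finset.card_add_card_compl]
  set k := B.card with hk
  -- edge counts
  set eA := (G.edgeFinset.filter (fun e => ∀ v ∈ e, v ∈ A)).card with heA
  have hEAB : eA ≤ (G.edgeFinset.filter (fun e => ∀ v ∈ e, v ∈ B)).card := by
    have := EA_le_EB G A (by rw [← edgeCount_eq]; exact hAsum)
    have hfe : (G.edgeFinset.filter (fun e => ∀ v ∈ e, v ∉ A)) =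
        (G.edgeFinset.filter (fun e => ∀ v ∈ e, v ∈ B)) := by
      apply Finset.filter_congr
      intro e _
      simp [hB]
    rw [hfe] at this
    exact this
  have hEBbound : (G.edgeFinset.filter (fun e => ∀ v ∈ e, v ∈ B)).card ≤
      (B.filter (fun v => C v = 0)).card * (B.filter (fun v => C v ≠ 0)).card :=
    EB_le G C B
  set b0 := (B.filter (fun v => C v = 0)).card with hb0
  set b1 := (B.filter (fun v => C v ≠ 0)).card with hb1
  have hb01 : b0 + b1 = k := by
    rw [hb0, hb1, hk, Finset.card_filter_add_card_filter_not]
  -- a ≤ α + eA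
  have haα : a ≤ α + eA := by
    obtain ⟨S, hS, hcard⟩ := indep_from_sparse G A
    have := indep_le_indepNum G hS
    omega
  -- real arithmetic
  set s := Real.sqrt (1 + (α : ℝ)) with hs
  have hs2 : s ^ 2 = 1 + (α : ℝ) := Real.sq_sqrt (by positivity)
  have hs1 : 1 ≤ s := by
    rw [hs, show (1 : ℝ) = Real.sqrt 1 by simp]
    exact Real.sqrt_le_sqrt (by simp)
  have hcast1 : (a : ℝ) + (k : ℝ) = (n : ℝ) := by exact_mod_cast (hAcard ▸ hkn)
  have hcast2 : (n : ℝ) ≤ 2 * (α : ℝ) := by exact_mod_cast hn2α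
  rcases le_or_gt (2 * s - 2) (k : ℝ) with hcase | hcase
  · linarith
  · have haα' : (a : ℝ) ≤ (α : ℝ) + (eA : ℝ) := by exact_mod_cast haα
    have heAb : (eA : ℝ) ≤ (b0 : ℝ) * (b1 : ℝ) := by
      exact_mod_cast le_trans hEAB hEBbound
    have hb01' : (b0 : ℝ) + (b1 : ℝ) = (k : ℝ) := by exact_mod_cast hb01
    have hk0 : (0 : ℝ) ≤ (k : ℝ) := Nat.cast_nonneg k
    have hsq : 4 * ((b0 : ℝ) * (b1 : ℝ)) ≤ (k : ℝ) ^ 2 := by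
      nlinarith [sq_nonneg ((b0 : ℝ) - (b1 : ℝ))]
    nlinarith [hsq, hcase, hk0, hs2, hs1, haα', heAb]

end AnnPaper
end

section
/- For every integer k ≥ 1, the graph G_k consisting of a triangle v₁v₂v₃ with v₁ joined to k pendant leaves, v₂ joined to k pendant leaves, and v₃ joined to one pendant leaf, is a König–Egerváry graph with n(G_k) = 2k+4, α(G_k) = 2k+1, μ(G_k) = 3, m(G_k) = 2k+4, and a(G_k) = 2k+2; consequently a(G_k) - α(G_k) = μ(G_k) - 2, showing the bound a(G) - α(G) ≤ μ(G) - 2 is attained by infinitely many non-bipartite König–Egerváry graphs. -/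
open Finset

namespace AnnPaper

variable {V : Type*}

def gAdj (k a b : ℕ) : Prop :=
  (a = 0 ∧ b = 1) ∨ (a = 0 ∧ b = 2) ∨ (a = 1 ∧ b = 2) ∨
  (a = 0 ∧ 3 ≤ b ∧ b ≤ k + 2) ∨ (a = 1 ∧ k + 3 ≤ b ∧ b ≤ 2 * k + 2) ∨
  (a = 2 ∧ b = 2 * k + 3)

instance (k a b : ℕ) : Decidable (gAdj k a b) := by unfold gAdj; infer_instance

lemma gAdj_01 (k : ℕ) : gAdj k 0 1 := Or.inl ⟨rfl, rfl⟩
lemma gAdj_02 (k : ℕ) : gAdj k 0 2 := Or.inr (Or.inl ⟨rfl, rfl⟩)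
lemma gAdj_12 (k : ℕ) : gAdj k 1 2 := Or.inr (Or.inr (Or.inl ⟨rfl, rfl⟩))
lemma gAdj_leaf0 (k b : ℕ) (h3 : 3 ≤ b) (hb : b ≤ k+2) : gAdj k 0 b :=
  Or.inr (Or.inr (Or.inr (Or.inl ⟨rfl, h3, hb⟩)))
lemma gAdj_leaf1 (k b : ℕ) (h3 : k+3 ≤ b) (hb : b ≤ 2*k+2) : gAdj k 1 b :=
  Or.inr (Or.inr (Or.inr (Or.inr (Or.inl ⟨rfl, h3, hb⟩))))
lemma gAdj_leaf2 (k : ℕ) : gAdj k 2 (2*k+3) :=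
  Or.inr (Or.inr (Or.inr (Or.inr (Or.inr ⟨rfl, rfl⟩))))

def Gk (k : ℕ) : SimpleGraph (Fin (2 * k + 4)) where
  Adj a b := gAdj k a.val b.val ∨ gAdj k b.val a.val
  symm := ⟨by intro a b h; tauto⟩
  loopless := ⟨by intro a h; simp only [gAdj] at h; omega⟩

instance (k : ℕ) : DecidableRel (Gk k).Adj := fun _ _ => inferInstanceAs (Decidable (_ ∨ _))

lemma adj_iff (k : ℕ) (a b : Fin (2 * k + 4)) :
    (Gk k).Adj a b ↔ gAdj k a.val b.val ∨ gAdj k b.val a.val := Iff.rfl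

lemma filter_val_card (n : ℕ) (P : ℕ → Prop) [DecidablePred P] :
    ((univ : Finset (Fin n)).filter (fun b => P b.val)).card
      = ((range n).filter P).card := by
  apply Finset.card_bij (fun b _ => b.val)
  · intro a ha; simp only [mem_filter, mem_univ, true_and] at ha
    simp only [mem_filter, mem_range]; exact ⟨a.isLt, ha⟩
  · intro a _ b _ h; exact Fin.ext h
  · intro b hb; simp only [mem_filter, mem_range] at hb
    exact ⟨⟨b, hb.1⟩, by simp [hb.2], rfl⟩

lemma deg_eq_card (k : ℕ) (v : Fin (2 * k + 4)) :
    deg (Gk k) v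
      = ((range (2*k+4)).filter (fun i => gAdj k v.val i ∨ gAdj k i v.val)).card := by
  have h1 : (Gk k).neighborFinset v
      = (univ : Finset (Fin (2*k+4))).filter
          (fun b => gAdj k v.val b.val ∨ gAdj k b.val v.val) := by
    ext b; simp [SimpleGraph.mem_neighborFinset, adj_iff]
  have h2 : deg (Gk k) v = ((Gk k).neighborFinset v).card := by
    rw [deg, Set.ncard_eq_toFinset_card']; rfl
  rw [h2, h1]
  exact filter_val_card (2*k+4) (fun i => gAdj k v.val i ∨ gAdj k i v.val)

lemma sSup_eq {S : Set ℕ} {N : ℕ} (h1 : N ∈ S) (h2 : ∀ m ∈ S, m ≤ N) : sSup S = N :=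
  le_antisymm (csSup_le ⟨N, h1⟩ h2) (le_csSup ⟨N, fun m hm => h2 m hm⟩ h1)

def D (k i : ℕ) : ℕ := if i = 0 ∨ i = 1 then k + 2 else if i = 2 then 3 else 1

lemma D_le (k i : ℕ) (hk : 1 ≤ k) : D k i ≤ k + 2 := by unfold D; split_ifs <;> omega

lemma deg_eq_D (k : ℕ) (hk : 1 ≤ k) (v : Fin (2 * k + 4)) :
    deg (Gk k) v = D k v.val := by
  have hv := v.isLt
  rw [deg_eq_card]
  by_cases h0 : v.val = 0
  · have : (range (2*k+4)).filter (fun i => gAdj k v.val i ∨ gAdj k i v.val)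
        = Icc 1 (k+2) := by
      ext i; simp only [mem_filter, mem_range, mem_Icc, gAdj, h0, true_and, and_true, false_and, and_false, or_false, false_or]; omega
    have hD : D k v.val = k + 2 := by unfold D; simp [h0]
    rw [this, Nat.card_Icc, hD]; omega
  · by_cases h1 : v.val = 1
    · have : (range (2*k+4)).filter (fun i => gAdj k v.val i ∨ gAdj k i v.val)
          = insert 0 (insert 2 (Icc (k+3) (2*k+2))) := by
        ext i; simp only [mem_filter, mem_range, mem_insert, mem_Icc, gAdj, h1, true_and, and_true, false_and, and_false, or_false, false_or]; omega
      have hD : D k v.val = k + 2 := by unfold D; simp [h1]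
      rw [this, card_insert_of_notMem (by simp only [mem_insert, mem_Icc]; omega),
        card_insert_of_notMem (by simp only [mem_Icc]; omega), Nat.card_Icc, hD]; omega
    · by_cases h2 : v.val = 2
      · have : (range (2*k+4)).filter (fun i => gAdj k v.val i ∨ gAdj k i v.val)
            = insert 0 (insert 1 {2*k+3}) := by
          ext i; simp only [mem_filter, mem_range, mem_insert, mem_singleton, gAdj, h2, true_and, and_true, false_and, and_false, or_false, false_or]; omega
        have hD : D k v.val = 3 := by unfold D; split_ifs <;> omega
        rw [this, card_insert_of_notMem (by simp only [mem_insert, mem_singleton]; omega),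
          card_insert_of_notMem (by simp only [mem_singleton]; omega), card_singleton, hD]
      · -- leaf
        have h3 : 3 ≤ v.val := by omega
        have hD : D k v.val = 1 := by unfold D; split_ifs <;> omega
        rw [hD]
        by_cases hL0 : v.val ≤ k + 2
        · have : (range (2*k+4)).filter (fun i => gAdj k v.val i ∨ gAdj k i v.val)
              = {0} := by
            ext i; simp only [mem_filter, mem_range, mem_singleton]; simp only [gAdj]; omega
          rw [this, card_singleton]
        · by_cases hL1 : v.val ≤ 2*k+2
          · have : (range (2*k+4)).filter (fun i => gAdj k v.val i ∨ gAdj k i v.val)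
                = {1} := by
              ext i; simp only [mem_filter, mem_range, mem_singleton]; simp only [gAdj]; omega
            rw [this, card_singleton]
          · have : (range (2*k+4)).filter (fun i => gAdj k v.val i ∨ gAdj k i v.val)
                = {2} := by
              ext i; simp only [mem_filter, mem_range, mem_singleton]; simp only [gAdj]; omega
            rw [this, card_singleton]

lemma sum_D (k : ℕ) : ∑ i ∈ range (2*k+4), D k i = 4*k+8 := by
  have hpt : ∀ i, D k i = 1 + ((if i = 0 then k+1 else 0) + ((if i = 1 then k+1 else 0)
      + (if i = 2 then 2 else 0))) := by
    intro i; unfold D; split_ifs <;> omega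
  calc ∑ i ∈ range (2*k+4), D k i
      = ∑ i ∈ range (2*k+4), (1 + ((if i = 0 then k+1 else 0) + ((if i = 1 then k+1 else 0)
      + (if i = 2 then 2 else 0)))) := by simp_rw [hpt]
    _ = 4*k+8 := by
        rw [Finset.sum_add_distrib, Finset.sum_add_distrib, Finset.sum_add_distrib]
        rw [Finset.sum_const, card_range, smul_eq_mul]
        rw [Finset.sum_ite_eq' (range (2*k+4)) 0 (fun _ => k+1),
          Finset.sum_ite_eq' (range (2*k+4)) 1 (fun _ => k+1),
          Finset.sum_ite_eq' (range (2*k+4)) 2 (fun _ => 2)]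
        simp only [mem_range]
        rw [if_pos (by omega), if_pos (by omega), if_pos (by omega)]
        omega

lemma sum_deg (k : ℕ) (hk : 1 ≤ k) : ∑ v : Fin (2*k+4), deg (Gk k) v = 4*k+8 := by
  calc ∑ v : Fin (2*k+4), deg (Gk k) v = ∑ v : Fin (2*k+4), D k v.val := by
        apply Finset.sum_congr rfl; intro v _; exact deg_eq_D k hk v
    _ = ∑ i ∈ range (2*k+4), D k i := Fin.sum_univ_eq_sum_range (D k) (2*k+4)
    _ = 4*k+8 := sum_D k

lemma deg_eq_degree_s19 (k : ℕ) (v : Fin (2*k+4)) : deg (Gk k) v = (Gk k).degree v := by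
  rw [deg, Set.ncard_eq_toFinset_card']; rfl

lemma edgeCount_eq_s19 (k : ℕ) (hk : 1 ≤ k) : edgeCount (Gk k) = 2*k+4 := by
  have h1 : edgeCount (Gk k) = (Gk k).edgeFinset.card := by
    rw [edgeCount, Set.ncard_eq_toFinset_card']; rfl
  have h2 := SimpleGraph.sum_degrees_eq_twice_card_edges (Gk k)
  have h3 : ∑ v : Fin (2*k+4), (Gk k).degree v = 4*k+8 := by
    rw [← sum_deg k hk]; exact Finset.sum_congr rfl fun v _ => (deg_eq_degree_s19 k v).symm
  omega

lemma adj_low (k : ℕ) {a b : Fin (2*k+4)} (h : (Gk k).Adj a b) :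
    a.val ≤ 2 ∨ b.val ≤ 2 := by
  rw [adj_iff] at h; unfold gAdj at h; omega

lemma card_le_of_val_subset {n : ℕ} (s : Finset (Fin n)) (P : ℕ → Prop) [DecidablePred P]
    (h : ∀ x ∈ s, P x.val) : s.card ≤ ((range n).filter P).card := by
  calc s.card ≤ ((univ : Finset (Fin n)).filter (fun v => P v.val)).card :=
        card_le_card (fun x hx => mem_filter.mpr ⟨mem_univ x, h x hx⟩)
    _ = _ := filter_val_card n P

lemma indepNum_eq (k : ℕ) (hk : 1 ≤ k) : indepNum (Gk k) = 2*k+1 := by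
  apply sSup_eq
  · -- witness: all the leaves
    refine ⟨(univ : Finset (Fin (2*k+4))).filter (fun v => 3 ≤ v.val), ?_, ?_⟩
    · intro a ha b hb hadj
      rw [mem_filter] at ha hb
      rcases adj_low k hadj with h | h <;> omega
    · rw [filter_val_card]
      have : (range (2*k+4)).filter (fun i => 3 ≤ i) = Icc 3 (2*k+3) := by
        ext i; simp only [mem_filter, mem_range, mem_Icc]; omega
      rw [this, Nat.card_Icc]; omega
  · rintro m ⟨s, hs, rfl⟩
    set v0 : Fin (2*k+4) := ⟨0, by omega⟩ with hv0
    set v1 : Fin (2*k+4) := ⟨1, by omega⟩ with hv1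
    set v2 : Fin (2*k+4) := ⟨2, by omega⟩ with hv2
    have hval0 : (v0 : ℕ) = 0 := rfl
    have hval1 : (v1 : ℕ) = 1 := rfl
    have hval2 : (v2 : ℕ) = 2 := rfl
    clear hv0 hv1 hv2
    clear_value v0 v1 v2
    by_cases h0 : v0 ∈ s
    · have key : ∀ x ∈ s, ¬(1 ≤ x.val ∧ x.val ≤ k+2) := by
        intro x hx hcon
        apply hs v0 h0 x hx
        rw [adj_iff, hval0]
        refine Or.inl ?_
        have hx3 : (x : ℕ) = 1 ∨ (x : ℕ) = 2 ∨ 3 ≤ (x : ℕ) := by omega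
        rcases hx3 with h | h | h
        · rw [h]; exact gAdj_01 k
        · rw [h]; exact gAdj_02 k
        · exact gAdj_leaf0 k _ h hcon.2
      have hle := card_le_of_val_subset s (fun i => ¬(1 ≤ i ∧ i ≤ k+2)) key
      have : (range (2*k+4)).filter (fun i => ¬(1 ≤ i ∧ i ≤ k+2))
          = insert 0 (Icc (k+3) (2*k+3)) := by
        ext i; simp only [mem_filter, mem_range, mem_insert, mem_Icc]; omega
      rw [this, card_insert_of_notMem (by simp only [mem_Icc]; omega), Nat.card_Icc] at hle
      omega
    · by_cases h1 : v1 ∈ s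
      · have key : ∀ x ∈ s, ¬(x.val = 0 ∨ x.val = 2 ∨ (k+3 ≤ x.val ∧ x.val ≤ 2*k+2)) := by
          intro x hx hcon
          apply hs v1 h1 x hx
          rw [adj_iff, hval1]
          rcases hcon with h | h | h
          · rw [h]; exact Or.inr (gAdj_01 k)
          · rw [h]; exact Or.inl (gAdj_12 k)
          · exact Or.inl (gAdj_leaf1 k _ h.1 h.2)
        have hle := card_le_of_val_subset s
          (fun i => ¬(i = 0 ∨ i = 2 ∨ (k+3 ≤ i ∧ i ≤ 2*k+2))) key
        have : (range (2*k+4)).filter (fun i => ¬(i = 0 ∨ i = 2 ∨ (k+3 ≤ i ∧ i ≤ 2*k+2)))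
            = insert 1 (insert (2*k+3) (Icc 3 (k+2))) := by
          ext i; simp only [mem_filter, mem_range, mem_insert, mem_Icc]; omega
        rw [this, card_insert_of_notMem (by simp only [mem_insert, mem_Icc]; omega),
          card_insert_of_notMem (by simp only [mem_Icc]; omega), Nat.card_Icc] at hle
        omega
      · by_cases h2 : v2 ∈ s
        · have key : ∀ x ∈ s, ¬(x.val = 0 ∨ x.val = 1 ∨ x.val = 2*k+3) := by
            intro x hx hcon
            apply hs v2 h2 x hx
            rw [adj_iff, hval2]
            rcases hcon with h | h | h
            · rw [h]; exact Or.inr (gAdj_02 k)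
            · rw [h]; exact Or.inr (gAdj_12 k)
            · rw [h]; exact Or.inl (gAdj_leaf2 k)
          have hle := card_le_of_val_subset s
            (fun i => ¬(i = 0 ∨ i = 1 ∨ i = 2*k+3)) key
          have : (range (2*k+4)).filter (fun i => ¬(i = 0 ∨ i = 1 ∨ i = 2*k+3))
              = Icc 2 (2*k+2) := by
            ext i; simp only [mem_filter, mem_range, mem_Icc]; omega
          rw [this, Nat.card_Icc] at hle
          omega
        · have key : ∀ x ∈ s, 3 ≤ x.val := by
            intro x hx
            by_contra hcon
            have hx3 : x.val = 0 ∨ x.val = 1 ∨ x.val = 2 := by omega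
            rcases hx3 with h | h | h
            · exact h0 (by rwa [show x = v0 from Fin.ext (h.trans hval0.symm)] at hx)
            · exact h1 (by rwa [show x = v1 from Fin.ext (h.trans hval1.symm)] at hx)
            · exact h2 (by rwa [show x = v2 from Fin.ext (h.trans hval2.symm)] at hx)
          have hle := card_le_of_val_subset s (fun i => 3 ≤ i) key
          have : (range (2*k+4)).filter (fun i => 3 ≤ i) = Icc 3 (2*k+3) := by
            ext i; simp only [mem_filter, mem_range, mem_Icc]; omega
          rw [this, Nat.card_Icc] at hle
          omega

lemma matchNum_eq (k : ℕ) (hk : 1 ≤ k) : matchNum (Gk k) = 3 := by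
  classical
  apply sSup_eq
  · refine ⟨{s((⟨0, by omega⟩ : Fin (2*k+4)), (⟨3, by omega⟩ : Fin (2*k+4))),
      s((⟨1, by omega⟩ : Fin (2*k+4)), (⟨k+3, by omega⟩ : Fin (2*k+4))),
      s((⟨2, by omega⟩ : Fin (2*k+4)), (⟨2*k+3, by omega⟩ : Fin (2*k+4)))}, ⟨?_, ?_⟩, ?_⟩
    · intro e he
      simp only [coe_insert, Set.mem_insert_iff, coe_singleton,
        Set.mem_singleton_iff] at he
      rcases he with rfl | rfl | rfl <;> rw [SimpleGraph.mem_edgeSet]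
      · exact Or.inl (gAdj_leaf0 k 3 (by omega) (by omega))
      · exact Or.inl (gAdj_leaf1 k (k+3) (by omega) (by omega))
      · exact Or.inl (gAdj_leaf2 k)
    · intro e he f hf hne v hv hv'
      simp only [mem_insert, mem_singleton] at he hf
      rcases he with rfl | rfl | rfl <;> rcases hf with rfl | rfl | rfl <;>
        first
          | exact hne rfl
          | (simp only [Sym2.mem_iff] at hv hv'
             rcases hv with rfl | rfl <;> rcases hv' with h | h <;>
               (apply_fun Fin.val at h; simp only [Fin.val_mk] at h; omega))
    · rw [card_insert_of_notMem, card_insert_of_notMem, card_singleton]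
      · simp only [mem_singleton, Sym2.eq_iff, Fin.mk.injEq]
        omega
      · simp only [mem_insert, mem_singleton, Sym2.eq_iff, Fin.mk.injEq]
        omega
  · rintro m ⟨s, ⟨hsub, hdisj⟩, rfl⟩
    have hch : ∀ e ∈ s, ∃ w : Fin (2*k+4), w ∈ e ∧ w.val ≤ 2 := by
      intro e he
      have hE : e ∈ (Gk k).edgeSet := hsub (mem_coe.mpr he)
      revert hE
      refine Sym2.inductionOn e ?_
      intro a b hab
      rw [SimpleGraph.mem_edgeSet] at hab
      rcases adj_low k hab with h | h
      · exact ⟨a, by simp, h⟩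
      · exact ⟨b, by simp, h⟩
    have hTcard : ((univ : Finset (Fin (2*k+4))).filter (fun v => v.val ≤ 2)).card = 3 := by
      rw [filter_val_card (2*k+4) (fun i => i ≤ 2)]
      have : (range (2*k+4)).filter (fun i => i ≤ 2) = range 3 := by
        ext i; simp only [mem_filter, mem_range]; omega
      rw [this, card_range]
    have hle := Finset.card_le_card_of_injOn
      (f := fun e => if h : ∃ w : Fin (2*k+4), w ∈ e ∧ w.val ≤ 2
        then h.choose else (⟨0, by omega⟩ : Fin (2*k+4)))
      (s := s) (t := (univ : Finset (Fin (2*k+4))).filter (fun v => v.val ≤ 2))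
      (by
        intro e he
        have h := hch e he
        simp only [dif_pos h]
        exact mem_filter.mpr ⟨mem_univ _, h.choose_spec.2⟩)
      (by
        intro e he f hf' heq
        by_contra hne
        have h1 := hch e (mem_coe.mp he)
        have h2 := hch f (mem_coe.mp hf')
        simp only [dif_pos h1, dif_pos h2] at heq
        exact (hdisj e (mem_coe.mp he) f (mem_coe.mp hf') hne
          h1.choose h1.choose_spec.1) (heq ▸ h2.choose_spec.1))
    omega

lemma annNum_eq (k : ℕ) (hk : 1 ≤ k) : annNum (Gk k) = 2*k+2 := by
  classical
  apply sSup_eq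
  · set v0 : Fin (2*k+4) := ⟨0, by omega⟩ with hv0
    set v1 : Fin (2*k+4) := ⟨1, by omega⟩ with hv1
    have hd0 : deg (Gk k) v0 = k+2 := by
      rw [deg_eq_D k hk]; unfold D; exact if_pos (Or.inl rfl)
    have hd1 : deg (Gk k) v1 = k+2 := by
      rw [deg_eq_D k hk]; unfold D; exact if_pos (Or.inr rfl)
    have hne : v0 ≠ v1 := by
      intro h; have : (0:ℕ) = 1 := congrArg Fin.val h; omega
    refine ⟨(univ : Finset (Fin (2*k+4))).filter (fun v => 2 ≤ v.val), ?_, ?_⟩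
    · rw [filter_val_card (2*k+4) (fun i => 2 ≤ i)]
      have : (range (2*k+4)).filter (fun i => 2 ≤ i) = Icc 2 (2*k+3) := by
        ext i; simp only [mem_filter, mem_range, mem_Icc]; omega
      rw [this, Nat.card_Icc]; omega
    · have hA : (univ : Finset (Fin (2*k+4))).filter (fun v => 2 ≤ v.val)
          = univ \ {v0, v1} := by
        ext x
        simp only [mem_filter, mem_univ, true_and, mem_sdiff, mem_insert, mem_singleton, not_or]
        constructor
        · intro h
          refine ⟨?_, ?_⟩
          · intro hx; rw [hx] at h; simp [hv0] at h
          · intro hx; rw [hx] at h; simp [hv1] at h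
        · intro ⟨h0, h1⟩
          rcases Nat.lt_or_ge x.val 2 with h | h
          · exfalso
            have hx2 : x.val = 0 ∨ x.val = 1 := by omega
            rcases hx2 with hx | hx
            · exact h0 (Fin.ext hx)
            · exact h1 (Fin.ext hx)
          · exact h
      have hsplit := Finset.sum_sdiff (f := deg (Gk k))
        (subset_univ ({v0, v1} : Finset (Fin (2*k+4))))
      have hpair : ∑ v ∈ ({v0, v1} : Finset (Fin (2*k+4))), deg (Gk k) v
          = 2*k+4 := by
        rw [Finset.sum_pair hne, hd0, hd1]; omega
      have htot := sum_deg k hk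
      rw [edgeCount_eq_s19 k hk, hA]
      omega
  · rintro m ⟨A, hAcard, hsum⟩
    subst hAcard
    by_contra hgt
    obtain ⟨B, hBA, hBcard⟩ := Finset.exists_subset_card_eq
      (show 2*k+3 ≤ A.card by omega)
    have hc : Bᶜ.card = 1 := by
      rw [Finset.card_compl, hBcard, Fintype.card_fin]; omega
    obtain ⟨u, hu⟩ := Finset.card_eq_one.mp hc
    have hsc := Finset.sum_add_sum_compl B (deg (Gk k))
    rw [hu, sum_singleton] at hsc
    have hdu : deg (Gk k) u ≤ k+2 := by
      rw [deg_eq_D k hk]; exact D_le k u.val hk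
    have htot := sum_deg k hk
    have hBle : ∑ v ∈ B, deg (Gk k) v ≤ ∑ v ∈ A, deg (Gk k) v :=
      Finset.sum_le_sum_of_subset hBA
    rw [edgeCount_eq_s19 k hk] at hsum
    omega

lemma not_col (k : ℕ) (hk : 1 ≤ k) : ¬ (Gk k).Colorable 2 := by
  rintro ⟨C⟩
  have h01 : (Gk k).Adj ⟨0, by omega⟩ ⟨1, by omega⟩ := Or.inl (gAdj_01 k)
  have h02 : (Gk k).Adj ⟨0, by omega⟩ ⟨2, by omega⟩ := Or.inl (gAdj_02 k)
  have h12 : (Gk k).Adj ⟨1, by omega⟩ ⟨2, by omega⟩ := Or.inl (gAdj_12 k)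
  have d01 := C.valid h01
  have d02 := C.valid h02
  have d12 := C.valid h12
  have v01 : (C ⟨0, by omega⟩).val ≠ (C ⟨1, by omega⟩).val := fun h => d01 (Fin.ext h)
  have v02 : (C ⟨0, by omega⟩).val ≠ (C ⟨2, by omega⟩).val := fun h => d02 (Fin.ext h)
  have v12 : (C ⟨1, by omega⟩).val ≠ (C ⟨2, by omega⟩).val := fun h => d12 (Fin.ext h)
  have b0 := (C ⟨0, by omega⟩).isLt
  have b1 := (C ⟨1, by omega⟩).isLt
  have b2 := (C ⟨2, by omega⟩).isLt
  omega

theorem stmt19 (k : ℕ) (hk : 1 ≤ k) :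
    ∃ G : SimpleGraph (Fin (2 * k + 4)), ¬ G.Colorable 2 ∧
      indepNum G + matchNum G = Fintype.card (Fin (2 * k + 4)) ∧
      indepNum G = 2 * k + 1 ∧ matchNum G = 3 ∧
      edgeCount G = 2 * k + 4 ∧ annNum G = 2 * k + 2 ∧
      (annNum G : ℤ) - (indepNum G : ℤ) = (matchNum G : ℤ) - 2 := by
  refine ⟨Gk k, not_col k hk, ?_, indepNum_eq k hk, matchNum_eq k hk,
    edgeCount_eq_s19 k hk, annNum_eq k hk, ?_⟩
  · rw [indepNum_eq k hk, matchNum_eq k hk, Fintype.card_fin]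
  · rw [indepNum_eq k hk, matchNum_eq k hk, annNum_eq k hk]
    push_cast
    ring


end AnnPaper
end
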